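/- Let L : {0,1}^n × {0,1}^n → ℝ be a ReLU gate, i.e., L(x,y) = max{0, ⟨w₁,x⟩ + ⟨w₂,y⟩ + α} for some w₁, w₂ ∈ ℝ^n and α ∈ ℝ. Then the spiky rank of the matrix L is at most 3n + 3. -/
import Mathlib


open Matrix MeasureTheory

/-- A blocky matrix: its support is a disjoint union of combinatorial rectangles,
with value 1 on the support and 0 elsewhere. -/
def IsBlocky {F : Type*} [Field F] {m n : Type*} (M : Matrix m n F) : Prop :=
  ∃ (k : ℕ) (S : Fin k → Finset m) (T : Fin k → Finset n),
    (∀ a b, a ≠ b → Disjoint (S a) (S b)) ∧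
    (∀ a b, a ≠ b → Disjoint (T a) (T b)) ∧
    (∀ i j, (∃ l, i ∈ S l ∧ j ∈ T l) → M i j = 1) ∧
    (∀ i j, (¬ ∃ l, i ∈ S l ∧ j ∈ T l) → M i j = 0)

/-- A spiky matrix: the entrywise product of a blocky matrix and a rank-one matrix. -/
def IsSpiky {F : Type*} [Field F] {m n : Type*} (M : Matrix m n F) : Prop :=
  ∃ (B : Matrix m n F) (u : m → F) (v : n → F),
    IsBlocky B ∧ ∀ i j, M i j = B i j * (u i * v j)

/-- The spiky rank: minimum number of spiky matrices summing to `M`. -/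
noncomputable def spikyRank {F : Type*} [Field F] {m n : Type*} (M : Matrix m n F) : ℕ :=
  sInf {r | ∃ f : Fin r → Matrix m n F, (∀ i, IsSpiky (f i)) ∧ ∑ i, f i = M}

/-- The blocky rank: minimum number of blocky matrices whose linear combination equals `M`. -/
noncomputable def blockyRank {F : Type*} [Field F] {m n : Type*} (M : Matrix m n F) : ℕ :=
  sInf {r | ∃ (f : Fin r → Matrix m n F) (c : Fin r → F),
    (∀ i, IsBlocky (f i)) ∧ ∑ i, c i • f i = M}

/-- Sparsity: the number of nonzero entries of a matrix. -/
noncomputable def matSparsity {F : Type*} [Zero F] {m n : Type*} (M : Matrix m n F) : ℕ :=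
  {p : m × n | M p.1 p.2 ≠ 0}.ncard

/-- Rank-`r` rigidity: minimum number of entries that must be changed to bring the rank
down to `r`. -/
noncomputable def rigidity {F : Type*} [Field F] {N : ℕ}
    (M : Matrix (Fin N) (Fin N) F) (r : ℕ) : ℕ :=
  sInf {s | ∃ A C : Matrix (Fin N) (Fin N) F, M = A + C ∧ A.rank ≤ r ∧ matSparsity C ≤ s}

/-- Sign spiky rank: minimum spiky rank over real matrices with the same sign pattern. -/
noncomputable def signSpikyRank {m n : Type*} (M : Matrix m n ℝ) : ℕ :=
  sInf {r | ∃ A : Matrix m n ℝ,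
    (∀ i j, Real.sign (A i j) = Real.sign (M i j)) ∧ spikyRank A ≤ r}

/-- Blocky cover number: minimum number of blocky matrices whose supports' union is
exactly the set of 1-entries of the Boolean matrix `M`. -/
noncomputable def blockyCover {m n : Type*} (M : Matrix m n ℝ) : ℕ :=
  sInf {k | ∃ f : Fin k → Matrix m n ℝ, (∀ l, IsBlocky (f l)) ∧
    ∀ i j, M i j = 1 ↔ ∃ l, f l i j = 1}
namespace ReluAux

/-! ### Bit-decomposition of the comparison `t ≤ i` -/

def Ck (k i t : ℕ) : Prop :=
  i / 2 ^ (k + 1) = t / 2 ^ (k + 1) ∧ (i / 2 ^ k % 2 = 1 ∧ t / 2 ^ k % 2 = 0)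

instance (k i t : ℕ) : Decidable (Ck k i t) := by unfold Ck; infer_instance

lemma div_pow_eq_of_div_pow {i t k j : ℕ} (h : i / 2 ^ k = t / 2 ^ k) (hj : k ≤ j) :
    i / 2 ^ j = t / 2 ^ j := by
  have e : 2 ^ j = 2 ^ k * 2 ^ (j - k) := by rw [← pow_add]; congr 1; omega
  rw [e, ← Nat.div_div_eq_div_mul, ← Nat.div_div_eq_div_mul, h]

lemma div_two_pow_succ (m k : ℕ) : m / 2 ^ k / 2 = m / 2 ^ (k + 1) := by
  rw [Nat.div_div_eq_div_mul, pow_succ]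

lemma Ck_lt {k i t : ℕ} (h : Ck k i t) : t / 2 ^ k < i / 2 ^ k := by
  obtain ⟨h1, h2, h3⟩ := h
  have e1 := div_two_pow_succ i k
  have e2 := div_two_pow_succ t k
  omega

lemma Ck_imp_le {k i t : ℕ} (h : Ck k i t) : t ≤ i := by
  by_contra hlt
  have h1 := Ck_lt h
  have h2 : i ≤ t := le_of_not_ge hlt
  have := Nat.div_le_div_right (c := 2 ^ k) h2
  omega

open Finset in
lemma sum_ind (n i t : ℕ) (hi : i < 2 ^ n) (ht : t ≤ 2 ^ n) :
    ∑ k ∈ Finset.range (n + 1),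
      (if (if k = n then i = t else Ck k i t) then (1 : ℝ) else 0)
      = if t ≤ i then 1 else 0 := by
  rcases lt_trichotomy i t with hlt | heq | hgt
  · rw [if_neg (by omega)]
    apply Finset.sum_eq_zero
    intro k _
    rw [if_neg]
    split
    · omega
    · intro hC; exact absurd (Ck_imp_le hC) (by omega)
  · subst heq
    rw [if_pos le_rfl]
    rw [Finset.sum_eq_single_of_mem n (self_mem_range_succ n)]
    · simp
    · intro b _ hbn
      rw [if_neg]
      simp only [if_neg hbn]
      intro hC
      obtain ⟨_, h2, h3⟩ := hC
      omega
  · rw [if_pos (le_of_lt hgt)]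
    have htlt : t < 2 ^ n := lt_of_lt_of_le hgt (le_of_lt hi)
    set s := (Finset.range (n + 1)).filter (fun k => i / 2 ^ k ≠ t / 2 ^ k) with hs
    have h0s : 0 ∈ s := by
      simp only [hs, mem_filter, mem_range]
      constructor
      · omega
      · simpa using (by omega : i ≠ t)
    have hsne : s.Nonempty := ⟨0, h0s⟩
    set k₀ := s.max' hsne with hk₀
    have hk₀s : k₀ ∈ s := s.max'_mem hsne
    have hk₀ne : i / 2 ^ k₀ ≠ t / 2 ^ k₀ := (mem_filter.mp hk₀s).2
    have hk₀lt : k₀ < n + 1 := mem_range.mp (mem_filter.mp hk₀s).1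
    have hnn : ¬ (n ∈ s) := by
      simp only [hs, mem_filter, mem_range]
      rintro ⟨-, hne⟩
      rw [Nat.div_eq_of_lt hi, Nat.div_eq_of_lt htlt] at hne
      exact hne rfl
    have hk₀n : k₀ ≠ n := fun h => hnn (h ▸ hk₀s)
    have hk₀ltn : k₀ < n := by omega
    have hsucc : i / 2 ^ (k₀ + 1) = t / 2 ^ (k₀ + 1) := by
      by_contra hne
      have : k₀ + 1 ∈ s := by
        simp only [hs, mem_filter, mem_range]
        exact ⟨by omega, hne⟩
      have := s.le_max' _ this
      omega
    have hCk₀ : Ck k₀ i t := by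
      refine ⟨hsucc, ?_⟩
      have e1 := div_two_pow_succ i k₀
      have e2 := div_two_pow_succ t k₀
      have hle := Nat.div_le_div_right (c := 2 ^ k₀) (le_of_lt hgt)
      omega
    rw [Finset.sum_eq_single_of_mem k₀ (mem_range.mpr hk₀lt)]
    · simp [hk₀n, hCk₀]
    · intro b hb hbk
      rw [if_neg]
      split
      · omega
      · intro hC
        have hbs : b ∈ s := by
          obtain ⟨_, h2, h3⟩ := hC
          simp only [hs, mem_filter]
          exact ⟨hb, by omega⟩
        have hble : b ≤ k₀ := s.le_max' _ hbs
        have hblt : b < k₀ := lt_of_le_of_ne hble hbk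
        exact hk₀ne (div_pow_eq_of_div_pow hC.1 (by omega))

/-! ### Rank functions for the ReLU gate -/

noncomputable def aF {n : ℕ} (w₁ : Fin n → ℝ) (x : Fin n → Bool) : ℝ :=
  ∑ i, w₁ i * (if x i then (1 : ℝ) else 0)

noncomputable def bF {n : ℕ} (w₂ : Fin n → ℝ) (α : ℝ) (y : Fin n → Bool) : ℝ :=
  (∑ i, w₂ i * (if y i then (1 : ℝ) else 0)) + α

open Classical in
noncomputable def AV {n : ℕ} (w₁ : Fin n → ℝ) : Finset ℝ :=
  Finset.image (aF w₁) Finset.univ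

open Classical in
noncomputable def rk {n : ℕ} (w₁ : Fin n → ℝ) (x : Fin n → Bool) : ℕ :=
  ((AV w₁).filter (fun v => v < aF w₁ x)).card

open Classical in
noncomputable def th {n : ℕ} (w₁ w₂ : Fin n → ℝ) (α : ℝ) (y : Fin n → Bool) : ℕ :=
  ((AV w₁).filter (fun v => v + bF w₂ α y ≤ 0)).card

lemma AV_card_le {n : ℕ} (w₁ : Fin n → ℝ) : (AV w₁).card ≤ 2 ^ n := by
  classical
  calc (AV w₁).card ≤ (Finset.univ : Finset (Fin n → Bool)).card := Finset.card_image_le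
  _ = 2 ^ n := by simp [Finset.card_univ]

lemma rk_lt {n : ℕ} (w₁ : Fin n → ℝ) (x : Fin n → Bool) : rk w₁ x < 2 ^ n := by
  classical
  have h1 : ((AV w₁).filter (fun v => v < aF w₁ x)) ⊂ AV w₁ := by
    refine Finset.ssubset_iff_of_subset (Finset.filter_subset _ _) |>.mpr ?_
    exact ⟨aF w₁ x, Finset.mem_image_of_mem _ (Finset.mem_univ x), by simp⟩
  calc rk w₁ x < (AV w₁).card := Finset.card_lt_card h1
  _ ≤ 2 ^ n := AV_card_le w₁

lemma th_le {n : ℕ} (w₁ w₂ : Fin n → ℝ) (α : ℝ) (y : Fin n → Bool) :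
    th w₁ w₂ α y ≤ 2 ^ n := by
  classical
  calc th w₁ w₂ α y ≤ (AV w₁).card := Finset.card_le_card (Finset.filter_subset _ _)
  _ ≤ 2 ^ n := AV_card_le w₁

lemma key {n : ℕ} (w₁ w₂ : Fin n → ℝ) (α : ℝ) (x y : Fin n → Bool) :
    0 < aF w₁ x + bF w₂ α y ↔ th w₁ w₂ α y ≤ rk w₁ x := by
  classical
  constructor
  · intro hpos
    apply Finset.card_le_card
    intro v hv
    rw [Finset.mem_filter] at hv ⊢
    refine ⟨hv.1, ?_⟩
    nlinarith [hv.2]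
  · intro hle
    by_contra hnp
    push_neg at hnp
    have hss : ((AV w₁).filter (fun v => v < aF w₁ x)) ⊂
        ((AV w₁).filter (fun v => v + bF w₂ α y ≤ 0)) := by
      rw [Finset.ssubset_iff_of_subset]
      · exact ⟨aF w₁ x, by
          rw [Finset.mem_filter]
          exact ⟨Finset.mem_image_of_mem _ (Finset.mem_univ x), by linarith⟩, by simp⟩
      · intro v hv
        rw [Finset.mem_filter] at hv ⊢
        exact ⟨hv.1, by linarith [hv.2]⟩
    have := Finset.card_lt_card hss
    unfold rk th at hle
    omega

/-! ### Generic blocky/spiky facts -/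

lemma isBlocky_rect {X Y : Type*} [Fintype X] [Fintype Y]
    {F : Type*} [Field F] (K : ℕ)
    (r : X → ℕ) (s : Y → ℕ) (φ : X → Prop) (ψ : Y → Prop)
    (hr : ∀ x, r x < K) (M : Matrix X Y F)
    (hM1 : ∀ x y, (r x = s y ∧ (φ x ∧ ψ y)) → M x y = 1)
    (hM0 : ∀ x y, ¬ (r x = s y ∧ (φ x ∧ ψ y)) → M x y = 0) :
    IsBlocky M := by
  classical
  refine ⟨K, fun l => Finset.univ.filter (fun x => r x = l.val ∧ φ x),
    fun l => Finset.univ.filter (fun y => s y = l.val ∧ ψ y), ?_, ?_, ?_, ?_⟩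
  · intro a b hab
    rw [Finset.disjoint_left]
    intro x hx hx'
    rw [Finset.mem_filter] at hx hx'
    exact hab (Fin.ext (hx.2.1 ▸ hx'.2.1))
  · intro a b hab
    rw [Finset.disjoint_left]
    intro y hy hy'
    rw [Finset.mem_filter] at hy hy'
    exact hab (Fin.ext (hy.2.1 ▸ hy'.2.1))
  · rintro x y ⟨l, hx, hy⟩
    rw [Finset.mem_filter] at hx hy
    exact hM1 x y ⟨hx.2.1.trans hy.2.1.symm, hx.2.2, hy.2.2⟩
  · intro x y h
    apply hM0
    rintro ⟨h1, h2, h3⟩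
    exact h ⟨⟨r x, hr x⟩, Finset.mem_filter.mpr ⟨Finset.mem_univ _, rfl, h2⟩,
      Finset.mem_filter.mpr ⟨Finset.mem_univ _, h1.symm, h3⟩⟩

lemma isBlocky_zero {F : Type*} [Field F] {m n : Type*} :
    IsBlocky (0 : Matrix m n F) :=
  ⟨0, Fin.elim0, Fin.elim0, fun a => a.elim0, fun a => a.elim0,
   fun _ _ h => absurd h (by rintro ⟨l, -⟩; exact l.elim0), fun _ _ _ => rfl⟩

lemma isSpiky_zero {F : Type*} [Field F] {m n : Type*} :
    IsSpiky (0 : Matrix m n F) :=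
  ⟨0, fun _ => 0, fun _ => 0, isBlocky_zero, fun i j => by simp⟩

lemma isSpiky_mul {F : Type*} [Field F] {m n : Type*}
    (B : Matrix m n F) (hB : IsBlocky B) (u : m → F) (v : n → F) :
    IsSpiky (Matrix.of fun x y => B x y * (u x * v y)) :=
  ⟨B, u, v, hB, fun _ _ => rfl⟩

lemma spikyRank_le_of_sum {F : Type*} [Field F] {m n : Type*} (M : Matrix m n F)
    {r R : ℕ} (hrR : r ≤ R) (f : ℕ → Matrix m n F)
    (hs : ∀ j, j < r → IsSpiky (f j))
    (hsum : ∑ j ∈ Finset.range r, f j = M) :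
    spikyRank M ≤ R := by
  apply Nat.sInf_le
  refine ⟨fun j => if j.val < r then f j.val else 0, fun i => ?_, ?_⟩
  · show IsSpiky (if i.val < r then f i.val else 0)
    by_cases h : i.val < r
    · rw [if_pos h]; exact hs _ h
    · rw [if_neg h]; exact isSpiky_zero
  · rw [Fin.sum_univ_eq_sum_range (fun j => if j < r then f j else 0) R]
    rw [← Finset.sum_subset (Finset.range_subset_range.mpr hrR)
      (fun x _ hx => if_neg (by simpa using hx))]
    rw [Finset.sum_congr rfl (fun x hx => if_pos (Finset.mem_range.mp hx))]
    exact hsum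

/-! ### The blocky/spiky decomposition of the ReLU matrix -/

noncomputable def Bmat (n : ℕ) (w₁ w₂ : Fin n → ℝ) (α : ℝ) (k : ℕ) :
    Matrix (Fin n → Bool) (Fin n → Bool) ℝ :=
  Matrix.of fun x y =>
    if (if k = n then rk w₁ x = th w₁ w₂ α y else Ck k (rk w₁ x) (th w₁ w₂ α y))
    then (1 : ℝ) else 0

noncomputable def Gmat (n : ℕ) (w₁ w₂ : Fin n → ℝ) (α : ℝ) (j : ℕ) :
    Matrix (Fin n → Bool) (Fin n → Bool) ℝ :=
  if j < n + 1 then Matrix.of (fun x y => Bmat n w₁ w₂ α j x y * (aF w₁ x * 1))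
  else Matrix.of (fun x y => Bmat n w₁ w₂ α (j - (n + 1)) x y * ((1 : ℝ) * bF w₂ α y))

lemma isBlocky_Bmat (n : ℕ) (w₁ w₂ : Fin n → ℝ) (α : ℝ) (k : ℕ) :
    IsBlocky (Bmat n w₁ w₂ α k) := by
  by_cases hk : k = n
  · apply isBlocky_rect (2 ^ n) (rk w₁) (th w₁ w₂ α) (fun _ => True) (fun _ => True)
      (rk_lt w₁)
    · rintro x y ⟨h1, -, -⟩
      simp [Bmat, hk, h1]
    · intro x y h
      have : ¬ rk w₁ x = th w₁ w₂ α y := fun he => h ⟨he, trivial, trivial⟩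
      simp [Bmat, hk, this]
  · apply isBlocky_rect (2 ^ n) (fun x => rk w₁ x / 2 ^ (k + 1))
      (fun y => th w₁ w₂ α y / 2 ^ (k + 1))
      (fun x => rk w₁ x / 2 ^ k % 2 = 1) (fun y => th w₁ w₂ α y / 2 ^ k % 2 = 0)
      (fun x => lt_of_le_of_lt (Nat.div_le_self _ _) (rk_lt w₁ x))
    · rintro x y ⟨h1, h2, h3⟩
      have hC : Ck k (rk w₁ x) (th w₁ w₂ α y) := ⟨h1, h2, h3⟩
      simp [Bmat, hk, hC]
    · intro x y h
      have : ¬ Ck k (rk w₁ x) (th w₁ w₂ α y) := fun hC => h ⟨hC.1, hC.2.1, hC.2.2⟩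
      simp [Bmat, hk, this]

lemma isSpiky_Gmat (n : ℕ) (w₁ w₂ : Fin n → ℝ) (α : ℝ) (j : ℕ) :
    IsSpiky (Gmat n w₁ w₂ α j) := by
  unfold Gmat
  split
  · exact isSpiky_mul _ (isBlocky_Bmat n w₁ w₂ α j) _ _
  · exact isSpiky_mul _ (isBlocky_Bmat n w₁ w₂ α (j - (n + 1))) _ _

lemma sum_Gmat (n : ℕ) (w₁ w₂ : Fin n → ℝ) (α : ℝ) :
    ∑ j ∈ Finset.range (2 * n + 2), Gmat n w₁ w₂ α j =
    Matrix.of (fun x y => max 0 (aF w₁ x + bF w₂ α y)) := by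
  have h22 : 2 * n + 2 = (n + 1) + (n + 1) := by ring
  ext x y
  rw [Matrix.sum_apply, h22, Finset.sum_range_add]
  have e1 : ∀ j ∈ Finset.range (n + 1),
      Gmat n w₁ w₂ α j x y = Bmat n w₁ w₂ α j x y * (aF w₁ x * 1) := by
    intro j hj
    simp only [Gmat]
    rw [if_pos (Finset.mem_range.mp hj)]
    rfl
  have e2 : ∀ j ∈ Finset.range (n + 1),
      Gmat n w₁ w₂ α ((n + 1) + j) x y
      = Bmat n w₁ w₂ α j x y * ((1 : ℝ) * bF w₂ α y) := by
    intro j hj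
    simp only [Gmat]
    rw [if_neg (by omega)]
    have hidx : (n + 1) + j - (n + 1) = j := by omega
    rw [hidx]
    rfl
  rw [Finset.sum_congr rfl e1, Finset.sum_congr rfl e2]
  simp only [Bmat, Matrix.of_apply]
  rw [← Finset.sum_mul, ← Finset.sum_mul]
  rw [sum_ind n (rk w₁ x) (th w₁ w₂ α y) (rk_lt w₁ x) (th_le w₁ w₂ α y)]
  by_cases h : th w₁ w₂ α y ≤ rk w₁ x
  · rw [if_pos h]
    have hpos := (key w₁ w₂ α x y).mpr h
    rw [max_eq_right (le_of_lt hpos)]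
    ring
  · rw [if_neg h]
    have hnp : ¬ 0 < aF w₁ x + bF w₂ α y := fun hp => h ((key w₁ w₂ α x y).mp hp)
    rw [max_eq_left (le_of_not_gt hnp)]
    ring

end ReluAux

/-- A ReLU gate, viewed as a 2^n x 2^n matrix, has spiky rank at most 3n + 3. -/
theorem spikyRank_relu_le (n : ℕ) (w₁ w₂ : Fin n → ℝ) (α : ℝ) :
    spikyRank (Matrix.of fun x y : Fin n → Bool =>
      max 0 (∑ i, w₁ i * (if x i then (1 : ℝ) else 0) +
             ∑ i, w₂ i * (if y i then (1 : ℝ) else 0) + α)) ≤ 3 * n + 3 := by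
  have hM : (Matrix.of fun x y : Fin n → Bool =>
      max 0 (∑ i, w₁ i * (if x i then (1 : ℝ) else 0) +
             ∑ i, w₂ i * (if y i then (1 : ℝ) else 0) + α))
      = Matrix.of (fun x y => max 0 (ReluAux.aF w₁ x + ReluAux.bF w₂ α y)) := by
    ext x y
    simp only [Matrix.of_apply, ReluAux.aF, ReluAux.bF]
    rw [add_assoc]
  rw [hM]
  exact ReluAux.spikyRank_le_of_sum _ (by omega) (ReluAux.Gmat n w₁ w₂ α)
    (fun j _ => ReluAux.isSpiky_Gmat n w₁ w₂ α j) (ReluAux.sum_Gmat n w₁ w₂ α)
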